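/- The function I(u,v) = (1/2)(k u^2 + sqrt(k^2 u^4 + 4 v^2)) is a first integral of the planar ODE system u' = v, v' = -f(u,v), where f(u,v) = (k/2) u (k u^2 + sqrt(k^2 u^4 + 4 v^2)); that is, along any solution (u(x), v(x)) of the system with (u,v) ≠ (0,0), the derivative d/dx I(u(x), v(x)) = 0. -/

import Mathlib

/-- `I(u,v) = (1/2)(k u² + √(k²u⁴ + 4v²))` is a first integral of the system
`u' = v`, `v' = -f(u,v)` with `f(u,v) = (k/2) u (k u² + √(k²u⁴ + 4v²))`:
along any solution avoiding the origin, `d/dx I(u(x),v(x)) = 0`. -/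
theorem stmt_1 (k : ℝ) (hk : 0 < k)
    (f I : ℝ → ℝ → ℝ)
    (hf : ∀ u v : ℝ, f u v = (k/2) * u * (k * u^2 + Real.sqrt (k^2 * u^4 + 4 * v^2)))
    (hI : ∀ u v : ℝ, I u v = (1/2) * (k * u^2 + Real.sqrt (k^2 * u^4 + 4 * v^2)))
    (u v : ℝ → ℝ)
    (hu : ∀ x, HasDerivAt u (v x) x)
    (hv : ∀ x, HasDerivAt v (-(f (u x) (v x))) x)
    (hne : ∀ x, (u x, v x) ≠ (0, 0)) :
    ∀ x, HasDerivAt (fun x => I (u x) (v x)) 0 x := by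
  intro x
  have hg : (0:ℝ) < k^2 * (u x)^4 + 4 * (v x)^2 := by
    rcases eq_or_ne (u x) 0 with h | h
    · have hv0 : v x ≠ 0 := by
        intro hv0; exact hne x (by simp [h, hv0])
      have h1 : 0 < 4 * (v x)^2 := by positivity
      nlinarith [sq_nonneg ((u x)^2)]
    · positivity
  set s := Real.sqrt (k^2 * (u x)^4 + 4 * (v x)^2) with hs
  have hspos : 0 < s := Real.sqrt_pos.mpr hg
  have hssq : s^2 = k^2 * (u x)^4 + 4 * (v x)^2 := Real.sq_sqrt hg.le
  have hgder : HasDerivAt (fun y => k^2 * (u y)^4 + 4 * (v y)^2)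
      (k^2 * ((4:ℕ) * (u x)^3 * v x) + 4 * ((2:ℕ) * (v x)^1 * (-(f (u x) (v x))))) x := by
    exact (((hu x).pow 4).const_mul (k^2)).add (((hv x).pow 2).const_mul 4)
  have hsder := hgder.sqrt (ne_of_gt hg)
  have huder : HasDerivAt (fun y => k * (u y)^2) (k * ((2:ℕ) * (u x)^1 * v x)) x :=
    ((hu x).pow 2).const_mul k
  have hcomb := ((huder.add hsder).const_mul (1/2 : ℝ))
  have heq : (fun y => I (u y) (v y)) =
      (fun y => (1/2) * (k * (u y)^2 + Real.sqrt (k^2 * (u y)^4 + 4 * (v y)^2))) := by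
    funext y; rw [hI]
  rw [heq]
  refine hcomb.congr_deriv ?_
  rw [hf, ← hs]
  field_simp [hspos.ne']
  push_cast
  nlinarith [hssq, hspos, sq_nonneg (u x), sq_nonneg (v x)]
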